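/- Let e, g : ω → ω and suppose e(g(i)) ≥ 2i for all but finitely many i. Let f be any gauge function with f(2^{-k}) = 2^{-e(k)} for all k ∈ ω. Then J_g ⊆ N^f, i.e. every A ∈ J_g satisfies ℋ^f(A) = 0. -/

import Mathlib

open MeasureTheory Set
open scoped ENNReal

/-- The Cantor space `2^ω = ℕ → Bool` carries the metric
`d(x,y) = 2^{-min{n : x n ≠ y n}}` (and `d(x,x) = 0`). -/
noncomputable local instance cantorMetric : MetricSpace (ℕ → Bool) := PiNat.metricSpace

/-- A gauge function: a nondecreasing function `f : [0,∞) → [0,∞)` with `f 0 = 0` and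
`lim_{x → 0⁺} f x = 0`. -/
structure IsGauge (f : ℝ → ℝ) : Prop where
  nonneg : ∀ x : ℝ, 0 ≤ x → 0 ≤ f x
  zero : f 0 = 0
  mono : MonotoneOn f (Ici 0)
  tendsto_zero : Filter.Tendsto f (nhdsWithin 0 (Ioi 0)) (nhds 0)

/-- The value `f(diam)` of a gauge function `f` on an extended-real diameter
(infinite diameters are sent to `∞`). -/
noncomputable def gaugeFn (f : ℝ → ℝ) : ℝ≥0∞ → ℝ≥0∞ := fun d =>
  if d = ∞ then ∞ else ENNReal.ofReal (f d.toReal)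

/-- The Hausdorff (outer) measure `ℋ^f` with gauge function `f`. -/
noncomputable def gaugeMeasure {X : Type*} [EMetricSpace X] (f : ℝ → ℝ) : OuterMeasure X :=
  OuterMeasure.mkMetric (gaugeFn f)

/-- `s` is an initial segment of `x : 2^ω`. -/
def InitSeg (s : List Bool) (x : ℕ → Bool) : Prop :=
  ∀ i : ℕ, (hi : i < s.length) → s.get ⟨i, hi⟩ = x i

/-- `[σ]_∞` : the set of `x ∈ 2^ω` having `σ n` as an initial segment for infinitely
many `n`. -/
def limsupCyl (σ : ℕ → List Bool) : Set (ℕ → Bool) :=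
  {x | ∃ᶠ n in Filter.atTop, InitSeg (σ n) x}

/-- The ideal `J_g = {A ⊆ 2^ω : ∃ σ, ht σ = g and A ⊆ [σ]_∞}`. -/
def Jg (g : ℕ → ℕ) : Set (Set (ℕ → Bool)) :=
  {A | ∃ σ : ℕ → List Bool, (∀ n, (σ n).length = g n) ∧ A ⊆ limsupCyl σ}

lemma ofReal_half_pow (m : ℕ) : ENNReal.ofReal ((1 / 2 : ℝ) ^ m) = (2⁻¹ : ℝ≥0∞) ^ m := by
  rw [ENNReal.ofReal_pow (by norm_num), one_div, ENNReal.ofReal_inv_of_pos (by norm_num),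
    ENNReal.ofReal_ofNat]

lemma diam_initSeg (s : List Bool) :
    EMetric.diam {x : ℕ → Bool | InitSeg s x} ≤ ENNReal.ofReal ((1 / 2 : ℝ) ^ s.length) := by
  apply EMetric.diam_le
  intro x hx y hy
  rw [edist_dist]
  apply ENNReal.ofReal_le_ofReal
  rcases eq_or_ne x y with rfl | hne
  · rw [dist_self]; positivity
  · have hmem : y ∈ PiNat.cylinder x s.length := by
      intro i hi
      exact ((hy i hi).symm.trans (hx i hi)).symm ▸ ((hy i hi).symm.trans (hx i hi))
    have := PiNat.mem_cylinder_iff_dist_le.1 hmem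
    rwa [dist_comm]

/-- Let `e, g : ω → ω` with `e (g i) ≥ 2 i` for all but finitely many
`i`, and let `f` be any gauge function with `f(2^{-k}) = 2^{-e k}` for all `k`.
Then `J_g ⊆ N^f`: every `A ∈ J_g` satisfies `ℋ^f(A) = 0`. -/
theorem stmt11 (e g : ℕ → ℕ) (heg : ∀ᶠ i in Filter.atTop, 2 * i ≤ e (g i))
    (f : ℝ → ℝ) (hf : IsGauge f)
    (hfe : ∀ k : ℕ, f ((1 / 2 : ℝ) ^ k) = (1 / 2 : ℝ) ^ (e k)) :
    ∀ A ∈ Jg g, gaugeMeasure f A = 0 := by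
  rintro A ⟨σ, hlen, hsub⟩
  -- e is monotone
  have hemono : Monotone e := by
    intro k k' hk
    have h1 : f ((1 / 2 : ℝ) ^ k') ≤ f ((1 / 2 : ℝ) ^ k) :=
      hf.mono (Set.mem_Ici.2 (by positivity)) (Set.mem_Ici.2 (by positivity))
        (pow_le_pow_of_le_one (by norm_num) (by norm_num) hk)
    rw [hfe, hfe] at h1
    by_contra h
    push_neg at h
    exact absurd h1 (not_le.2 (pow_lt_pow_right_of_lt_one₀ (by norm_num) (by norm_num) h))
  -- g tends to infinity
  have hgtop : Filter.Tendsto g Filter.atTop Filter.atTop := by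
    refine Filter.tendsto_atTop.2 fun B => ?_
    filter_upwards [heg, Filter.eventually_gt_atTop (e B)] with i h1 h2
    by_contra h
    push_neg at h
    have h3 : e (g i) ≤ e B := hemono h.le
    omega
  -- the cover sets
  set T : ℕ → Set (ℕ → Bool) := fun k => {x | InitSeg (σ k) x} with hT
  have hTdiam : ∀ k, EMetric.diam (T k) ≤ (2⁻¹ : ℝ≥0∞) ^ (g k) := by
    intro k
    have := diam_initSeg (σ k)
    rwa [hlen k, ofReal_half_pow] at this
  -- key pointwise estimate
  have key : ∀ k : ℕ, 2 * k ≤ e (g k) →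
      gaugeFn f (EMetric.diam (T k)) ≤ (2⁻¹ : ℝ≥0∞) ^ (2 * k) := by
    intro k hk
    have hd := hTdiam k
    have hne : EMetric.diam (T k) ≠ ∞ :=
      (hd.trans_lt (ENNReal.pow_lt_top (by simp [ENNReal.inv_lt_top]))).ne
    rw [gaugeFn, if_neg hne]
    have hd' : (EMetric.diam (T k)).toReal ≤ (1 / 2 : ℝ) ^ (g k) := by
      apply ENNReal.toReal_le_of_le_ofReal (by positivity)
      rwa [ofReal_half_pow]
    have hmf : f (EMetric.diam (T k)).toReal ≤ f ((1 / 2 : ℝ) ^ (g k)) :=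
      hf.mono (Set.mem_Ici.2 ENNReal.toReal_nonneg) (Set.mem_Ici.2 (by positivity)) hd'
    calc ENNReal.ofReal (f (EMetric.diam (T k)).toReal)
        ≤ ENNReal.ofReal (f ((1 / 2 : ℝ) ^ (g k))) := ENNReal.ofReal_le_ofReal hmf
      _ = (2⁻¹ : ℝ≥0∞) ^ (e (g k)) := by rw [hfe, ofReal_half_pow]
      _ ≤ (2⁻¹ : ℝ≥0∞) ^ (2 * k) :=
          pow_le_pow_right_of_le_one' (ENNReal.inv_le_one.2 ENNReal.one_lt_two.le) hk
  -- tail covers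
  have hcover : ∀ N, A ⊆ ⋃ n, T (N + n) := by
    intro N x hx
    obtain ⟨n, hn1, hn2⟩ := ((hsub hx).and_eventually (Filter.eventually_ge_atTop N)).exists
    exact Set.mem_iUnion.2 ⟨n - N, by simpa [hT, Nat.add_sub_cancel' hn2] using hn1⟩
  -- unfold the measure
  rw [gaugeMeasure, OuterMeasure.mkMetric, OuterMeasure.mkMetric']
  refine le_antisymm ?_ (zero_le)
  have happ : (⨆ r > (0 : ℝ≥0∞),
      OuterMeasure.mkMetric'.pre (fun s => gaugeFn f (EMetric.diam s)) r) A
      = ⨆ r > (0 : ℝ≥0∞),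
        OuterMeasure.mkMetric'.pre (fun s => gaugeFn f (EMetric.diam s)) r A := by
    rw [OuterMeasure.iSup_apply]
    exact iSup_congr fun r => OuterMeasure.iSup_apply _ _
  refine happ.trans_le ?_
  refine iSup₂_le fun r hr => ?_
  -- choose parameters
  obtain ⟨m₀, hm₀⟩ := ENNReal.exists_inv_two_pow_lt hr.ne'
  obtain ⟨N₁, hN₁⟩ := (Filter.tendsto_atTop.1 hgtop m₀).exists_forall_of_atTop
  obtain ⟨N₂, hN₂⟩ := heg.exists_forall_of_atTop
  set C : ℝ≥0∞ := (1 - 4⁻¹)⁻¹ with hC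
  have hCne : C ≠ ∞ := by
    rw [hC, Ne, ENNReal.inv_eq_top, tsub_eq_zero_iff_le]
    norm_num
  -- main estimate for each large N
  have main : ∀ N, N₁ ≤ N → N₂ ≤ N →
      OuterMeasure.mkMetric'.pre (fun s => gaugeFn f (EMetric.diam s)) r A
        ≤ (4⁻¹ : ℝ≥0∞) ^ N * C := by
    intro N hn1 hn2
    set μ := OuterMeasure.mkMetric'.pre (fun s : Set (ℕ → Bool) => gaugeFn f (EMetric.diam s)) r with hμ
    calc μ A ≤ μ (⋃ n, T (N + n)) := μ.mono (hcover N)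
      _ ≤ ∑' n, μ (T (N + n)) := measure_iUnion_le _
      _ ≤ ∑' n, gaugeFn f (EMetric.diam (T (N + n))) := by
          refine ENNReal.tsum_le_tsum fun n => ?_
          refine OuterMeasure.mkMetric'.pre_le ?_
          refine (hTdiam _).trans (le_trans ?_ hm₀.le)
          exact pow_le_pow_right_of_le_one' (ENNReal.inv_le_one.2 ENNReal.one_lt_two.le)
            (hN₁ _ (le_add_right hn1))
      _ ≤ ∑' n, (2⁻¹ : ℝ≥0∞) ^ (2 * (N + n)) :=
          ENNReal.tsum_le_tsum fun n => key _ (hN₂ _ (le_add_right hn2))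
      _ = (4⁻¹ : ℝ≥0∞) ^ N * C := by
          have h4 : ∀ m : ℕ, (2⁻¹ : ℝ≥0∞) ^ (2 * m) = (4⁻¹ : ℝ≥0∞) ^ m := by
            intro m
            rw [pow_mul]
            congr 1
            rw [← ENNReal.inv_pow]
            norm_num
          simp_rw [h4, pow_add, ENNReal.tsum_mul_left, ENNReal.tsum_geometric]
          rw [hC]
  -- conclude: the bound tends to 0
  have htend : Filter.Tendsto (fun N : ℕ => (4⁻¹ : ℝ≥0∞) ^ N * C) Filter.atTop (nhds 0) := by
    have := ENNReal.Tendsto.mul_const (ENNReal.tendsto_pow_atTop_nhds_zero_of_lt_one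
      (by norm_num : (4⁻¹ : ℝ≥0∞) < 1)) (Or.inr hCne)
    simpa using this
  refine ge_of_tendsto htend ?_
  filter_upwards [Filter.eventually_ge_atTop N₁, Filter.eventually_ge_atTop N₂] with N h1 h2
  exact main N h1 h2
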